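/- Let (Λ,d) be a 2-graph satisfying condition (3.1), and let λ₁ and λ₂ be isolated cycles in the red graph with vertex sets V₁ and V₂ respectively. (1) For every red path μ with r(μ) ∈ V₁, the map σ ↦ F₁(μ,σ) is a degree-preserving bijection from s(μ)(blue Λ)V₂ (blue paths with range s(μ) and source in V₂) onto r(μ)(blue Λ)V₂. (2) For every red path ν with r(ν) ∈ V₂, the map σ ↦ F₂(σ,ν) is a degree-preserving bijection from V₁(blue Λ)r(ν) onto V₁(blue Λ)s(ν). -/
import Mathlib


open scoped ENNReal

/-- A rank-2 graph (`2`-graph): a countable category whose morphisms (paths) carry a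
degree functor `d : Path → ℕ × ℕ` satisfying the unique factorisation property.
Vertices are identified with the paths of degree `(0,0)`; composition is a total
function whose behaviour is constrained only on composable pairs (`s p = r q`). -/
structure TwoGraph where
  Path : Type
  countable : Countable Path
  d : Path → ℕ × ℕ
  r : Path → Path
  s : Path → Path
  comp : Path → Path → Path
  d_r : ∀ p, d (r p) = 0
  d_s : ∀ p, d (s p) = 0
  r_vertex : ∀ p, d p = 0 → r p = p
  s_vertex : ∀ p, d p = 0 → s p = p
  id_comp : ∀ p, comp (r p) p = p
  comp_id : ∀ p, comp p (s p) = p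
  r_comp : ∀ p q, s p = r q → r (comp p q) = r p
  s_comp : ∀ p q, s p = r q → s (comp p q) = s q
  d_comp : ∀ p q, s p = r q → d (comp p q) = d p + d q
  comp_assoc : ∀ p q t, s p = r q → s q = r t → comp (comp p q) t = comp p (comp q t)
  factor : ∀ (lam : Path) (m n : ℕ × ℕ), d lam = m + n →
    ∃! mn : Path × Path,
      d mn.1 = m ∧ d mn.2 = n ∧ s mn.1 = r mn.2 ∧ comp mn.1 mn.2 = lam

namespace TwoGraph

variable (G : TwoGraph)

/-- Vertices are the paths of degree `0`. -/
def IsVertex (p : G.Path) : Prop := G.d p = 0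

/-- A blue path: one whose degree lies in `ℕ e₁`. -/
def IsBlue (p : G.Path) : Prop := (G.d p).2 = 0

/-- A red path: one whose degree lies in `ℕ e₂`. -/
def IsRed (p : G.Path) : Prop := (G.d p).1 = 0

/-- A blue edge: a path of degree `e₁ = (1,0)`. -/
def IsBlueEdge (p : G.Path) : Prop := G.d p = (1, 0)

/-- A red edge: a path of degree `e₂ = (0,1)`. -/
def IsRedEdge (p : G.Path) : Prop := G.d p = (0, 1)

/-- `Λ` is row-finite: `vΛⁿ` is finite for every vertex `v` and degree `n`. -/
def RowFinite : Prop :=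
  ∀ (v : G.Path) (n : ℕ × ℕ), G.IsVertex v →
    {p : G.Path | G.r p = v ∧ G.d p = n}.Finite

/-- `Λ` is a finite `2`-graph: `Λⁿ` is finite for every degree `n`. -/
def FinitePaths : Prop := ∀ n : ℕ × ℕ, {p : G.Path | G.d p = n}.Finite

/-- `μ` is an initial segment of `lam`, i.e. `lam = μ ν` for some `ν`. -/
def InitSeg (μ lam : G.Path) : Prop := ∃ ν, G.s μ = G.r ν ∧ G.comp μ ν = lam

/-- `μ` is a final segment of `lam`, i.e. `lam = ν μ` for some `ν`. -/
def FinalSeg (μ lam : G.Path) : Prop := ∃ ν, G.s ν = G.r μ ∧ G.comp ν μ = lam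

/-- The vertex `v` lies on the path `lam`, i.e. `v = lam(n)` for some `0 ≤ n ≤ d lam`. -/
def OnPath (lam v : G.Path) : Prop :=
  G.IsVertex v ∧ ∃ μ, G.InitSeg μ lam ∧ G.s μ = v

/-- A cycle: `d lam ≠ 0`, `r lam = s lam`, and `lam(n) ≠ s lam` for `0 < n < d lam`. -/
def IsCycle (lam : G.Path) : Prop :=
  G.d lam ≠ 0 ∧ G.r lam = G.s lam ∧
    ∀ μ, G.InitSeg μ lam → G.d μ ≠ 0 → G.d μ ≠ G.d lam → G.s μ ≠ G.s lam

/-- `lam` has no entrance: for `n ≤ d lam`, every path of degree `n` with range `r lam`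
is the initial segment `lam(0,n)`. -/
def HasNoEntrance (lam : G.Path) : Prop :=
  ∀ n : ℕ × ℕ, n ≤ G.d lam → ∀ μ, G.d μ = n → G.r μ = G.r lam → G.InitSeg μ lam

/-- `lam` has no exit: for `n ≤ d lam`, every path of degree `n` with source `s lam`
is the final segment `lam(d lam - n, d lam)`. -/
def HasNoExit (lam : G.Path) : Prop :=
  ∀ n : ℕ × ℕ, n ≤ G.d lam → ∀ μ, G.d μ = n → G.s μ = G.s lam → G.FinalSeg μ lam

/-- An isolated cycle: no entrances and no exits. -/
def IsIsolated (lam : G.Path) : Prop := G.HasNoEntrance lam ∧ G.HasNoExit lam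

/-- An isolated cycle in the red graph. -/
def IsIsolatedRedCycle (lam : G.Path) : Prop :=
  G.IsRed lam ∧ G.IsCycle lam ∧ G.IsIsolated lam

/-- Condition (3.1): `Λ` is row-finite, the blue graph contains no cycles, and each
vertex is the range of an isolated cycle in the red graph. -/
def Cond31 : Prop :=
  G.RowFinite ∧ (∀ p, G.IsBlue p → ¬ G.IsCycle p) ∧
    ∀ v, G.IsVertex v → ∃ lam, G.IsIsolatedRedCycle lam ∧ G.r lam = v

/-- A source of the blue graph: a vertex receiving no blue edges. -/
def IsBlueSource (v : G.Path) : Prop :=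
  G.IsVertex v ∧ ∀ e, G.IsBlueEdge e → G.r e ≠ v

/-- A sink of the blue graph: a vertex emitting no blue edges. -/
def IsBlueSink (v : G.Path) : Prop :=
  G.IsVertex v ∧ ∀ e, G.IsBlueEdge e → G.s e ≠ v

/-- `Λ^{≤ n}`. -/
def LeSet (n : ℕ × ℕ) : Set G.Path :=
  {lam | G.d lam ≤ n ∧
    ∀ μ, G.s lam = G.r μ → G.comp lam μ ≠ lam → ¬ G.d (G.comp lam μ) ≤ n}

/-- `IsSwap ρ τ τ' ρ'` says that `(τ', ρ') = 𝓕(ρ, τ)` is the factorisation of `ρτ`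
with the degrees in the reversed order: `τ'ρ' = ρτ`, `d τ' = d τ` and `d ρ' = d ρ`. -/
def IsSwap (ρ τ τ' ρ' : G.Path) : Prop :=
  G.s ρ = G.r τ ∧ G.s τ' = G.r ρ' ∧ G.d τ' = G.d τ ∧ G.d ρ' = G.d ρ ∧
    G.comp τ' ρ' = G.comp ρ τ

/-- The edge `e` occurs at position `n` in the red path `μ`. -/
def OccAt (μ e : G.Path) (n : ℕ) : Prop :=
  ∃ ρ ξ, G.d ρ = (0, n) ∧ G.s ρ = G.r e ∧ G.s e = G.r ξ ∧
    G.comp ρ (G.comp e ξ) = μ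

/-- `⟨μ, e⟩`: the number of occurrences of the red edge `e` in the red path `μ`. -/
noncomputable def occCount (μ e : G.Path) : ℕ :=
  Nat.card {n : ℕ // G.OccAt μ e n}

/-- Membership in `Y = (blue Λ)S`: a blue path whose source is a source of the
blue graph. -/
def InY (α : G.Path) : Prop := G.IsBlue α ∧ G.IsBlueSource (G.s α)

/-- One step of the factorisation permutation `𝓕` of the blue paths of a GBD:
`α' = 𝓕(α)` iff `f α = α' f'` for (the) red edges `f, f'` with `s f = r α`. -/
def FStep (α α' : G.Path) : Prop :=
  G.IsBlue α ∧ G.IsBlue α' ∧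
    ∃ f f', G.IsRedEdge f ∧ G.IsRedEdge f' ∧ G.s f = G.r α ∧ G.s α' = G.r f' ∧
      G.comp f α = G.comp α' f'

end TwoGraph

/-- `k`-fold iteration of the factorisation permutation, as a relation. -/
def TwoGraph.FIter (G : TwoGraph) : ℕ → G.Path → G.Path → Prop
  | 0, α, α' => α = α'
  | k + 1, α, α' => ∃ β, G.FStep α β ∧ TwoGraph.FIter G k β α'

namespace TwoGraph

variable (G : TwoGraph)

/-- `o(α) = k`: `k` is the order of the blue path `α` under the factorisation
permutation `𝓕`. -/
def HasOrder (α : G.Path) (k : ℕ) : Prop :=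
  0 < k ∧ G.FIter k α α ∧ ∀ m, 0 < m → m < k → ¬ G.FIter m α α

end TwoGraph

/-- `IsChainComp [e₁, …, eₙ] β` says `β = e₁ e₂ ⋯ eₙ`. -/
def TwoGraph.IsChainComp (G : TwoGraph) : List G.Path → G.Path → Prop
  | [], β => G.IsVertex β
  | e :: l, β => ∃ γ, TwoGraph.IsChainComp G l γ ∧ G.s e = G.r γ ∧ β = G.comp e γ

/-- `cyclePow lam m = lam^m`, the `m`-fold concatenation of the cycle `lam`,
with `lam^0 = s lam`. -/
def TwoGraph.cyclePow (G : TwoGraph) (lam : G.Path) : ℕ → G.Path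
  | 0 => G.s lam
  | m + 1 => G.comp lam (TwoGraph.cyclePow G lam m)

namespace TwoGraph

variable (G : TwoGraph)

/-! ### Relative (sub-2-graph) versions of the basic notions -/

/-- `μ` is an initial segment of `lam` within `P`. -/
def InitSegIn (P : Set G.Path) (μ lam : G.Path) : Prop :=
  ∃ ν ∈ P, G.s μ = G.r ν ∧ G.comp μ ν = lam

/-- `μ` is a final segment of `lam` within `P`. -/
def FinalSegIn (P : Set G.Path) (μ lam : G.Path) : Prop :=
  ∃ ν ∈ P, G.s ν = G.r μ ∧ G.comp ν μ = lam

/-- A cycle of the sub-2-graph with path-set `P`. -/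
def IsCycleIn (P : Set G.Path) (lam : G.Path) : Prop :=
  lam ∈ P ∧ G.d lam ≠ 0 ∧ G.r lam = G.s lam ∧
    ∀ μ ∈ P, G.InitSegIn P μ lam → G.d μ ≠ 0 → G.d μ ≠ G.d lam → G.s μ ≠ G.s lam

def HasNoEntranceIn (P : Set G.Path) (lam : G.Path) : Prop :=
  ∀ n : ℕ × ℕ, n ≤ G.d lam → ∀ μ ∈ P, G.d μ = n → G.r μ = G.r lam → G.InitSegIn P μ lam

def HasNoExitIn (P : Set G.Path) (lam : G.Path) : Prop :=
  ∀ n : ℕ × ℕ, n ≤ G.d lam → ∀ μ ∈ P, G.d μ = n → G.s μ = G.s lam → G.FinalSegIn P μ lam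

/-- An isolated cycle of the red graph of the sub-2-graph with path-set `P`. -/
def IsIsolatedRedCycleIn (P : Set G.Path) (lam : G.Path) : Prop :=
  lam ∈ P ∧ G.IsRed lam ∧ G.IsCycleIn P lam ∧
    G.HasNoEntranceIn P lam ∧ G.HasNoExitIn P lam

def RowFiniteIn (P : Set G.Path) : Prop :=
  ∀ (v : G.Path) (n : ℕ × ℕ), G.IsVertex v →
    {p : G.Path | p ∈ P ∧ G.r p = v ∧ G.d p = n}.Finite

/-- A source of the blue graph of the sub-2-graph with path-set `P`. -/
def IsBlueSourceIn (P : Set G.Path) (v : G.Path) : Prop :=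
  v ∈ P ∧ G.IsVertex v ∧ ∀ e ∈ P, G.IsBlueEdge e → G.r e ≠ v

/-- Condition (3.1) for the sub-2-graph with path-set `P`. -/
def Cond31In (P : Set G.Path) : Prop :=
  G.RowFiniteIn P ∧ (∀ p ∈ P, G.IsBlue p → ¬ G.IsCycleIn P p) ∧
    ∀ v ∈ P, G.IsVertex v → ∃ lam, G.IsIsolatedRedCycleIn P lam ∧ G.r lam = v

/-- `Λ_j = {λ ∈ Λ : s(λ) Λ W ≠ ∅}`: the paths admitting a path from their source
into the vertex set `W`. -/
def subGraphTo (W : Set G.Path) : Set G.Path :=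
  {p | ∃ μ, G.r μ = G.s p ∧ G.s μ ∈ W}

/-- `Λ` has large-permutation factorisations. -/
def HasLPF : Prop :=
  ∀ v, G.IsVertex v → ∀ l : ℕ, 0 < l → ∃ N : ℕ,
    ∀ α, G.IsBlue α → G.r α = v → G.d α = (N, 0) →
      ∀ k, G.HasOrder α k → l < k

end TwoGraph

/-- A generalised Bratteli diagram of depth `N ∈ ℕ ∪ {∞}` with vertex decomposition
`Λ⁰ = ⊔ₙ V n`. -/
structure IsGBD (G : TwoGraph) (N : ℕ∞) (V : ℕ → Set G.Path) : Prop where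
  rowFinite : G.RowFinite
  level_nonempty : ∀ n : ℕ, (n : ℕ∞) ≤ N → (V n).Nonempty
  level_finite : ∀ n : ℕ, (V n).Finite
  level_empty : ∀ n : ℕ, ¬ ((n : ℕ∞) ≤ N) → V n = ∅
  level_vertex : ∀ n, V n ⊆ {v | G.IsVertex v}
  cover : ∀ v, G.IsVertex v → ∃ n, v ∈ V n
  level_disjoint : ∀ m n, m ≠ n → Disjoint (V m) (V n)
  blue_level : ∀ e, G.IsBlueEdge e → ∃ n, G.r e ∈ V n ∧ G.s e ∈ V (n + 1)
  sinks_bottom : ∀ v, G.IsBlueSink v → v ∈ V 0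
  sources_top : ∀ v, G.IsBlueSource v → ∃ n : ℕ, (n : ℕ∞) = N ∧ v ∈ V n
  red_cycle : ∀ v, G.IsVertex v → ∃ lam, G.IsIsolatedRedCycle lam ∧ G.r lam = v
  red_level : ∀ f, G.IsRedEdge f → ∃ n, G.r f ∈ V n ∧ G.s f ∈ V n

/-- The sub-2-graph `Λ_N` of paths joining vertices in the first `N` levels. -/
def levelPaths (G : TwoGraph) (V : ℕ → Set G.Path) (N : ℕ) : Set G.Path :=
  {p | (∃ n ≤ N, G.r p ∈ V n) ∧ (∃ n ≤ N, G.s p ∈ V n)}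

/-- An infinite path in a 2-graph: a degree-preserving functor `Ω₂ → Λ`, recorded by
its segments `x(m,n)` for `m ≤ n` in `ℕ × ℕ`. -/
structure InfPath (G : TwoGraph) where
  seg : ℕ × ℕ → ℕ × ℕ → G.Path
  deg : ∀ m n : ℕ × ℕ, m ≤ n → G.d (seg m n) = n - m
  range_seg : ∀ m n : ℕ × ℕ, m ≤ n → G.r (seg m n) = seg m m
  source_seg : ∀ m n : ℕ × ℕ, m ≤ n → G.s (seg m n) = seg n n
  comp_seg : ∀ m n p : ℕ × ℕ, m ≤ n → n ≤ p → G.comp (seg m n) (seg n p) = seg m p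

/-- A Cuntz–Krieger `Λ`-family in a C*-algebra `A`. -/
structure CKFamily (G : TwoGraph) (A : Type*) [CStarAlgebra A] where
  S : G.Path → A
  ck1_sa : ∀ v, G.IsVertex v → star (S v) = S v
  ck1_idem : ∀ v, G.IsVertex v → S v * S v = S v
  ck1_orth : ∀ v w, G.IsVertex v → G.IsVertex w → v ≠ w → S v * S w = 0
  ck2 : ∀ p q, G.s p = G.r q → S p * S q = S (G.comp p q)
  ck3 : ∀ p, star (S p) * S p = S (G.s p)
  ck4 : ∀ (v : G.Path) (n : ℕ × ℕ), G.IsVertex v →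
    S v = ∑ᶠ lam ∈ {lam : G.Path | lam ∈ G.LeSet n ∧ G.r lam = v},
      S lam * star (S lam)

section CStar

variable {A : Type*} [CStarAlgebra A]

/-- The C*-subalgebra (as a subset) of `A` generated by a set `SS`. -/
def generatedCStar (SS : Set A) : Set A :=
  closure (NonUnitalStarAlgebra.adjoin ℂ SS : Set A)

/-- `P` is full in the C*-algebra `Bset ⊆ A`: every closed two-sided ideal of `Bset`
containing `P` is all of `Bset`. -/
def FullIn (Bset : Set A) (P : A) : Prop :=
  ∀ I : Set A, I ⊆ Bset → IsClosed I →
    (∀ x ∈ I, ∀ y ∈ I, x + y ∈ I) → (∀ (c : ℂ), ∀ x ∈ I, c • x ∈ I) →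
    (∀ a ∈ Bset, ∀ x ∈ I, a * x ∈ I ∧ x * a ∈ I) →
    P ∈ I → Bset ⊆ I

/-- The sum `∑_{v ∈ Λ⁰} s_v`, which is the unit of `C*(Λ)` for finite `Λ`. -/
noncomputable def ckUnit (G : TwoGraph) (F : CKFamily G A) : A :=
  ∑ᶠ v ∈ {v : G.Path | G.IsVertex v}, F.S v

/-- The canonical unitary `U = ∑_{α ∈ Y} s_α s_{λ(α)} s_α*`. -/
noncomputable def ckU (G : TwoGraph) (F : CKFamily G A) (lam : G.Path → G.Path) : A :=
  ∑ᶠ α ∈ {α : G.Path | G.InY α}, F.S α * F.S (lam α) * star (F.S α)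

/-- The gauge action: for every `z ∈ 𝕋²` there is a *-automorphism `γ_z` of the
C*-subalgebra generated by the family with `γ_z(s_λ) = z^{d(λ)} s_λ`. -/
def GaugeInvariant (G : TwoGraph) (F : CKFamily G A) : Prop :=
  ∀ z₁ z₂ : ℂ, ‖z₁‖ = 1 → ‖z₂‖ = 1 → ∃ γ : A → A,
    Set.BijOn γ (generatedCStar (Set.range F.S)) (generatedCStar (Set.range F.S)) ∧
    (∀ x ∈ generatedCStar (Set.range F.S), ∀ y ∈ generatedCStar (Set.range F.S),
      γ (x + y) = γ x + γ y ∧ γ (x * y) = γ x * γ y) ∧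
    (∀ x ∈ generatedCStar (Set.range F.S), γ (star x) = star (γ x)) ∧
    (∀ (c : ℂ), ∀ x ∈ generatedCStar (Set.range F.S), γ (c • x) = c • γ x) ∧
    (∀ p : G.Path, γ (F.S p) = (z₁ ^ (G.d p).1 * z₂ ^ (G.d p).2) • F.S p)

end CStar

namespace TwoGraph

variable {G : TwoGraph}

private lemma prod_eq {p : ℕ × ℕ} {a b : ℕ} (h1 : p.1 = a) (h2 : p.2 = b) : p = (a, b) := by
  cases p; simp_all

private lemma factor_ex (lam : G.Path) (m n : ℕ × ℕ) (h : G.d lam = m + n) :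
    ∃ p q : G.Path, G.d p = m ∧ G.d q = n ∧ G.s p = G.r q ∧ G.comp p q = lam := by
  obtain ⟨⟨p, q⟩, ⟨h1, h2, h3, h4⟩, _⟩ := G.factor lam m n h
  exact ⟨p, q, h1, h2, h3, h4⟩

private lemma factor_eq {lam : G.Path} {m n : ℕ × ℕ} (h : G.d lam = m + n)
    {p q p' q' : G.Path} (hp : G.d p = m) (hq : G.d q = n) (hs : G.s p = G.r q)
    (hc : G.comp p q = lam) (hp' : G.d p' = m) (hq' : G.d q' = n) (hs' : G.s p' = G.r q')
    (hc' : G.comp p' q' = lam) : p = p' ∧ q = q' := by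
  obtain ⟨mn, _, huniq⟩ := G.factor lam m n h
  have h1 := huniq (p, q) ⟨hp, hq, hs, hc⟩
  have h2 := huniq (p', q') ⟨hp', hq', hs', hc'⟩
  have h3 := h1.trans h2.symm
  exact ⟨congrArg Prod.fst h3, congrArg Prod.snd h3⟩

private lemma red_c_pos {lam : G.Path} (hl : G.IsIsolatedRedCycle lam) :
    0 < (G.d lam).2 := by
  rcases Nat.eq_zero_or_pos (G.d lam).2 with h | h
  · exact absurd (prod_eq hl.1 h) hl.2.1.1
  · exact h

private lemma onPath_proper {lam v : G.Path} (hl : G.IsIsolatedRedCycle lam)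
    (hv : G.OnPath lam v) :
    ∃ κ ν, (G.d κ).1 = 0 ∧ (G.d κ).2 < (G.d lam).2 ∧
      G.s κ = G.r ν ∧ G.comp κ ν = lam ∧ G.s κ = v := by
  obtain ⟨hvert, κ, ⟨ν, hsν, hcν⟩, hsκ⟩ := hv
  have hd : G.d lam = G.d κ + G.d ν := by rw [← hcν, G.d_comp κ ν hsν]
  have e1 := congrArg Prod.fst hd
  have e2 := congrArg Prod.snd hd
  rw [Prod.fst_add] at e1
  rw [Prod.snd_add] at e2
  have hred : (G.d lam).1 = 0 := hl.1
  have h1 : (G.d κ).1 = 0 := by omega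
  have h2 : (G.d κ).2 ≤ (G.d lam).2 := by omega
  rcases lt_or_eq_of_le h2 with hlt | heq
  · exact ⟨κ, ν, h1, hlt, hsν, hcν, hsκ⟩
  · -- κ is all of lam; v = r lam = s lam
    have hν0 : G.d ν = 0 := prod_eq (by omega) (by omega)
    have hrν : G.r ν = ν := G.r_vertex ν hν0
    have hκν : G.comp κ ν = κ := by
      rw [← (hsν.trans hrν), G.comp_id]
    have hκlam : κ = lam := by rw [← hcν, hκν]
    have hveq : v = G.r lam := by
      rw [← hsκ, hκlam, ← hl.2.1.2.1]
    refine ⟨G.r lam, lam, ?_, ?_, ?_, ?_, ?_⟩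
    · rw [G.d_r]; rfl
    · rw [G.d_r]; exact red_c_pos hl
    · rw [G.s_vertex _ (G.d_r lam)]
    · exact G.id_comp lam
    · rw [G.s_vertex _ (G.d_r lam)]; exact hveq.symm

private lemma edgeA {lam v : G.Path} (hl : G.IsIsolatedRedCycle lam) (hv : G.OnPath lam v) :
    ∃ e, G.d e = (0, 1) ∧ G.r e = v ∧ G.OnPath lam (G.s e) ∧
      ∀ e', G.d e' = (0, 1) → G.r e' = v → e' = e := by
  obtain ⟨κ, ν, hκ1, hκlt, hsκ, hcomp, hsv⟩ := onPath_proper hl hv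
  have hred : (G.d lam).1 = 0 := hl.1
  have hd : G.d lam = G.d κ + G.d ν := by rw [← hcomp, G.d_comp κ ν hsκ]
  have e1 := congrArg Prod.fst hd
  have e2 := congrArg Prod.snd hd
  rw [Prod.fst_add] at e1
  rw [Prod.snd_add] at e2
  set c := (G.d lam).2 with hc
  set k := (G.d κ).2 with hk
  have hκd : G.d κ = (0, k) := prod_eq hκ1 rfl
  have hνd : G.d ν = (0, c - k) := prod_eq (by omega) (by omega)
  have hν' : G.d ν = (0, 1) + (0, c - k - 1) := by
    rw [hνd, Prod.mk_add_mk]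
    exact prod_eq (by omega) (by omega)
  obtain ⟨e, ξ, hed, hξd, hseξ, hceξ⟩ := factor_ex ν (0, 1) (0, c - k - 1) hν'
  have h5 : G.r ν = G.r e := by rw [← hceξ, G.r_comp e ξ hseξ]
  have hre : G.r e = v := by rw [← h5, ← hsκ, hsv]
  have hsκe : G.s κ = G.r e := by rw [hsκ, h5]
  have hspe : G.s (G.comp κ e) = G.s e := G.s_comp κ e hsκe
  have hassoc : G.comp (G.comp κ e) ξ = lam := by
    rw [G.comp_assoc κ e ξ hsκe hseξ, hceξ, hcomp]
  have honse : G.OnPath lam (G.s e) :=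
    ⟨G.d_s e, G.comp κ e, ⟨ξ, hspe.trans hseξ, hassoc⟩, hspe⟩
  have hped : G.d (G.comp κ e) = (0, k + 1) := by
    rw [G.d_comp κ e hsκe, hκd, hed, Prod.mk_add_mk]
  refine ⟨e, hed, hre, honse, ?_⟩
  intro e' hed' hre'
  have hsκe' : G.s κ = G.r e' := by rw [hsv, hre']
  have hped' : G.d (G.comp κ e') = (0, k + 1) := by
    rw [G.d_comp κ e' hsκe', hκd, hed', Prod.mk_add_mk]
  have hle : ((0, k + 1) : ℕ × ℕ) ≤ G.d lam := by
    rw [prod_eq hred hc.symm]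
    exact Prod.mk_le_mk.2 ⟨le_refl 0, by omega⟩
  have hrpe' : G.r (G.comp κ e') = G.r lam := by
    rw [G.r_comp κ e' hsκe', ← hcomp, G.r_comp κ ν hsκ]
  obtain ⟨w, hsw, hcw⟩ := hl.2.2.1 (0, k + 1) hle (G.comp κ e') hped' hrpe'
  have hwd : G.d w = (0, c - k - 1) := by
    have hdw : G.d lam = G.d (G.comp κ e') + G.d w := by
      rw [← hcw, G.d_comp _ w hsw]
    have f1 := congrArg Prod.fst hdw
    have f2 := congrArg Prod.snd hdw
    rw [Prod.fst_add, hped'] at f1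
    rw [Prod.snd_add, hped'] at f2
    exact prod_eq (by simp at f1 ⊢; omega) (by simp at f2 ⊢; omega)
  have hsplit : G.d lam = (0, k + 1) + (0, c - k - 1) := by
    rw [prod_eq hred hc.symm, Prod.mk_add_mk]
    exact prod_eq (by omega) (by omega)
  have h6 := factor_eq hsplit hped hξd (hspe.trans hseξ) hassoc hped' hwd hsw hcw
  have hsplit2 : G.d (G.comp κ e) = (0, k) + (0, 1) := by
    rw [hped, Prod.mk_add_mk]
  have h7 := factor_eq hsplit2 hκd hed hsκe rfl hκd hed' hsκe' h6.1.symm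
  exact h7.2.symm

private lemma edgeB {lam v : G.Path} (hl : G.IsIsolatedRedCycle lam) (hv : G.OnPath lam v) :
    ∃ e, G.d e = (0, 1) ∧ G.s e = v ∧ G.OnPath lam (G.r e) ∧
      ∀ e', G.d e' = (0, 1) → G.s e' = v → e' = e := by
  obtain ⟨κ, ν, hκ1, hκlt, hsκ, hcomp, hsv⟩ := onPath_proper hl hv
  have hred : (G.d lam).1 = 0 := hl.1
  have hd : G.d lam = G.d κ + G.d ν := by rw [← hcomp, G.d_comp κ ν hsκ]
  have e1 := congrArg Prod.fst hd
  have e2 := congrArg Prod.snd hd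
  rw [Prod.fst_add] at e1
  rw [Prod.snd_add] at e2
  set c := (G.d lam).2 with hc
  set k := (G.d κ).2 with hk
  have hc0 : 0 < c := red_c_pos hl
  have hlamd : G.d lam = (0, c) := prod_eq hred hc.symm
  have hκd : G.d κ = (0, k) := prod_eq hκ1 rfl
  have hνd : G.d ν = (0, c - k) := prod_eq (by omega) (by omega)
  have hslam : G.s lam = G.s ν := by rw [← hcomp, G.s_comp κ ν hsκ]
  rcases Nat.eq_zero_or_pos k with hk0 | hkpos
  · -- k = 0 : v = r lam = s lam, take the last edge of lam
    have hκ0 : G.d κ = 0 := by rw [hκd, hk0]; rfl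
    have hκκ : G.s κ = κ := G.s_vertex κ hκ0
    have hκrν : κ = G.r ν := by rw [← hκκ, hsκ]
    have hlν : lam = ν := by rw [← hcomp, hκrν, G.id_comp]
    have hveq : v = G.s lam := by
      rw [← hsv, hκκ, hκrν, ← hlν, hl.2.1.2.1]
    have hsplit : G.d lam = (0, c - 1) + (0, 1) := by
      rw [hlamd, Prod.mk_add_mk]
      exact prod_eq (by omega) (by omega)
    obtain ⟨w, e, hwd, hed, hswe, hcwe⟩ := factor_ex lam (0, c - 1) (0, 1) hsplit
    have hse' : G.s lam = G.s e := by rw [← hcwe, G.s_comp w e hswe]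
    have hse : G.s e = v := by rw [← hse', hveq]
    have honr : G.OnPath lam (G.r e) := ⟨G.d_r e, w, ⟨e, hswe, hcwe⟩, hswe⟩
    refine ⟨e, hed, hse, honr, ?_⟩
    intro e' hed' hse''
    have hle : ((0, 1) : ℕ × ℕ) ≤ G.d lam := by
      rw [hlamd]
      exact Prod.mk_le_mk.2 ⟨le_refl 0, by omega⟩
    obtain ⟨w', hsw', hcw'⟩ :=
      hl.2.2.2 (0, 1) hle e' hed' (hse''.trans hveq)
    have hwd' : G.d w' = (0, c - 1) := by
      have hdw : G.d lam = G.d w' + G.d e' := by rw [← hcw', G.d_comp w' e' hsw']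
      have f1 := congrArg Prod.fst hdw
      have f2 := congrArg Prod.snd hdw
      rw [Prod.fst_add, hed'] at f1
      rw [Prod.snd_add, hed'] at f2
      exact prod_eq (by simp at f1 ⊢; omega) (by simp at f2 ⊢; omega)
    exact (factor_eq hsplit hwd hed hswe hcwe hwd' hed' hsw' hcw').2.symm
  · -- k ≥ 1 : take the last edge of κ
    have hκsplit : G.d κ = (0, k - 1) + (0, 1) := by
      rw [hκd, Prod.mk_add_mk]
      exact prod_eq (by omega) (by omega)
    obtain ⟨w, e, hwd, hed, hswe, hcwe⟩ := factor_ex κ (0, k - 1) (0, 1) hκsplit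
    have hseκ : G.s κ = G.s e := by rw [← hcwe, G.s_comp w e hswe]
    have hse : G.s e = v := by rw [← hseκ, hsv]
    have hseν : G.s e = G.r ν := by rw [← hseκ, hsκ]
    have hassoc : G.comp w (G.comp e ν) = lam := by
      rw [← G.comp_assoc w e ν hswe hseν, hcwe, hcomp]
    have hswr : G.s w = G.r (G.comp e ν) := by rw [G.r_comp e ν hseν, ← hswe]
    have honr : G.OnPath lam (G.r e) :=
      ⟨G.d_r e, w, ⟨G.comp e ν, hswr, hassoc⟩, hswe⟩
    refine ⟨e, hed, hse, honr, ?_⟩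
    intro e' hed' hse''
    have hse'ν : G.s e' = G.r ν := by rw [hse'', ← hsv, hsκ]
    have hdeν : G.d (G.comp e ν) = (0, c - k + 1) := by
      rw [G.d_comp e ν hseν, hed, hνd, Prod.mk_add_mk]
      exact prod_eq (by omega) (by omega)
    have hdeν' : G.d (G.comp e' ν) = (0, c - k + 1) := by
      rw [G.d_comp e' ν hse'ν, hed', hνd, Prod.mk_add_mk]
      exact prod_eq (by omega) (by omega)
    have hle : ((0, c - k + 1) : ℕ × ℕ) ≤ G.d lam := by
      rw [hlamd]
      exact Prod.mk_le_mk.2 ⟨le_refl 0, by omega⟩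
    have hseν' : G.s (G.comp e' ν) = G.s lam := by
      rw [G.s_comp e' ν hse'ν, hslam]
    obtain ⟨w', hsw', hcw'⟩ :=
      hl.2.2.2 (0, c - k + 1) hle (G.comp e' ν) hdeν' hseν'
    have hwd' : G.d w' = (0, k - 1) := by
      have hdw : G.d lam = G.d w' + G.d (G.comp e' ν) := by
        rw [← hcw', G.d_comp w' _ hsw']
      have f1 := congrArg Prod.fst hdw
      have f2 := congrArg Prod.snd hdw
      rw [Prod.fst_add, hdeν'] at f1
      rw [Prod.snd_add, hdeν'] at f2
      exact prod_eq (by simp at f1 ⊢; omega) (by simp at f2 ⊢; omega)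
    have hsplit : G.d lam = (0, k - 1) + (0, c - k + 1) := by
      rw [hlamd, Prod.mk_add_mk]
      exact prod_eq (by omega) (by omega)
    have h6 := factor_eq hsplit hwd hdeν hswr hassoc hwd' hdeν' hsw' hcw'
    have hsplit2 : G.d (G.comp e ν) = (0, 1) + (0, c - k) := by
      rw [hdeν, Prod.mk_add_mk]
      exact prod_eq (by omega) (by omega)
    have h7 := factor_eq hsplit2 hed hνd hseν rfl hed' hνd hse'ν h6.2.symm
    exact h7.1.symm

private lemma pathA {lam : G.Path} (hl : G.IsIsolatedRedCycle lam) (m : ℕ) :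
    ∀ v, G.OnPath lam v →
      (∃ ρ, G.d ρ = (0, m) ∧ G.r ρ = v ∧ G.OnPath lam (G.s ρ)) ∧
      (∀ ρ₁ ρ₂, G.d ρ₁ = (0, m) → G.r ρ₁ = v → G.d ρ₂ = (0, m) → G.r ρ₂ = v → ρ₁ = ρ₂) := by
  induction m with
  | zero =>
    intro v hv
    have hv0 : G.d v = (0, 0) := by rw [hv.1]; rfl
    constructor
    · refine ⟨v, hv0, G.r_vertex v hv.1, ?_⟩
      rw [G.s_vertex v hv.1]; exact hv
    · intro ρ₁ ρ₂ hd1 hr1 hd2 hr2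
      have h1 : ρ₁ = v := by rw [← G.r_vertex ρ₁ hd1, hr1]
      have h2 : ρ₂ = v := by rw [← G.r_vertex ρ₂ hd2, hr2]
      rw [h1, h2]
  | succ m ih =>
    intro v hv
    obtain ⟨e, hed, hre, hse_on, heuniq⟩ := edgeA hl hv
    obtain ⟨⟨ρ₀, hρ₀d, hρ₀r, hρ₀on⟩, huniq₀⟩ := ih (G.s e) hse_on
    have hcomp_ok : G.s e = G.r ρ₀ := hρ₀r.symm
    have key : ∀ ρ, G.d ρ = (0, m + 1) → G.r ρ = v →
        ∃ t, G.d t = (0, m) ∧ G.r t = G.s e ∧ ρ = G.comp e t := by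
      intro ρ hd hr
      have hsplit : G.d ρ = (0, 1) + (0, m) := by
        rw [hd, Prod.mk_add_mk]
        all_goals exact prod_eq (by omega) (by omega)
      obtain ⟨e₁, t, he₁, ht, hst, hct⟩ := factor_ex ρ (0, 1) (0, m) hsplit
      have hre₁ : G.r e₁ = v := by rw [← hr, ← hct, G.r_comp e₁ t hst]
      have heq : e₁ = e := heuniq e₁ he₁ hre₁
      rw [heq] at hst hct
      exact ⟨t, ht, hst.symm, hct.symm⟩
    constructor
    · refine ⟨G.comp e ρ₀, ?_, ?_, ?_⟩
      · rw [G.d_comp e ρ₀ hcomp_ok, hed, hρ₀d, Prod.mk_add_mk]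
        exact prod_eq (by omega) (by omega)
      · rw [G.r_comp e ρ₀ hcomp_ok, hre]
      · rw [G.s_comp e ρ₀ hcomp_ok]; exact hρ₀on
    · intro ρ₁ ρ₂ hd1 hr1 hd2 hr2
      obtain ⟨t₁, htd₁, htr₁, hρ₁⟩ := key ρ₁ hd1 hr1
      obtain ⟨t₂, htd₂, htr₂, hρ₂⟩ := key ρ₂ hd2 hr2
      rw [hρ₁, hρ₂, huniq₀ t₁ t₂ htd₁ htr₁ htd₂ htr₂]

private lemma pathB {lam : G.Path} (hl : G.IsIsolatedRedCycle lam) (m : ℕ) :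
    ∀ v, G.OnPath lam v →
      (∃ ρ, G.d ρ = (0, m) ∧ G.s ρ = v ∧ G.OnPath lam (G.r ρ)) ∧
      (∀ ρ₁ ρ₂, G.d ρ₁ = (0, m) → G.s ρ₁ = v → G.d ρ₂ = (0, m) → G.s ρ₂ = v → ρ₁ = ρ₂) := by
  induction m with
  | zero =>
    intro v hv
    have hv0 : G.d v = (0, 0) := by rw [hv.1]; rfl
    constructor
    · refine ⟨v, hv0, G.s_vertex v hv.1, ?_⟩
      rw [G.r_vertex v hv.1]; exact hv
    · intro ρ₁ ρ₂ hd1 hs1 hd2 hs2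
      have h1 : ρ₁ = v := by rw [← G.s_vertex ρ₁ hd1, hs1]
      have h2 : ρ₂ = v := by rw [← G.s_vertex ρ₂ hd2, hs2]
      rw [h1, h2]
  | succ m ih =>
    intro v hv
    obtain ⟨e, hed, hse, hre_on, heuniq⟩ := edgeB hl hv
    obtain ⟨⟨ρ₀, hρ₀d, hρ₀s, hρ₀on⟩, huniq₀⟩ := ih (G.r e) hre_on
    have hcomp_ok : G.s ρ₀ = G.r e := hρ₀s
    have key : ∀ ρ, G.d ρ = (0, m + 1) → G.s ρ = v →
        ∃ t, G.d t = (0, m) ∧ G.s t = G.r e ∧ ρ = G.comp t e := by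
      intro ρ hd hs
      have hsplit : G.d ρ = (0, m) + (0, 1) := by
        rw [hd, Prod.mk_add_mk]
      obtain ⟨t, e₁, ht, he₁, hst, hct⟩ := factor_ex ρ (0, m) (0, 1) hsplit
      have hse₁ : G.s e₁ = v := by rw [← hs, ← hct, G.s_comp t e₁ hst]
      have heq : e₁ = e := heuniq e₁ he₁ hse₁
      rw [heq] at hst hct
      exact ⟨t, ht, hst, hct.symm⟩
    constructor
    · refine ⟨G.comp ρ₀ e, ?_, ?_, ?_⟩
      · rw [G.d_comp ρ₀ e hcomp_ok, hρ₀d, hed, Prod.mk_add_mk]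
      · rw [G.s_comp ρ₀ e hcomp_ok, hse]
      · rw [G.r_comp ρ₀ e hcomp_ok]; exact hρ₀on
    · intro ρ₁ ρ₂ hd1 hs1 hd2 hs2
      obtain ⟨t₁, htd₁, hts₁, hρ₁⟩ := key ρ₁ hd1 hs1
      obtain ⟨t₂, htd₂, hts₂, hρ₂⟩ := key ρ₂ hd2 hs2
      rw [hρ₁, hρ₂, huniq₀ t₁ t₂ htd₁ hts₁ htd₂ hts₂]

private lemma red_on_s {lam ρ : G.Path} (hl : G.IsIsolatedRedCycle lam)
    (hρ : G.IsRed ρ) (hr : G.OnPath lam (G.r ρ)) : G.OnPath lam (G.s ρ) := by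
  obtain ⟨⟨ρ₀, hd₀, hr₀, hon₀⟩, huniq⟩ := pathA hl (G.d ρ).2 (G.r ρ) hr
  have h : ρ = ρ₀ := huniq ρ ρ₀ (prod_eq hρ rfl) rfl hd₀ hr₀
  rw [h]; exact hon₀

private lemma red_on_r {lam ρ : G.Path} (hl : G.IsIsolatedRedCycle lam)
    (hρ : G.IsRed ρ) (hs : G.OnPath lam (G.s ρ)) : G.OnPath lam (G.r ρ) := by
  obtain ⟨⟨ρ₀, hd₀, hs₀, hon₀⟩, huniq⟩ := pathB hl (G.d ρ).2 (G.s ρ) hs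
  have h : ρ = ρ₀ := huniq ρ ρ₀ (prod_eq hρ rfl) rfl hd₀ hs₀
  rw [h]; exact hon₀

private lemma red_unique_r {lam ρ₁ ρ₂ : G.Path} (hl : G.IsIsolatedRedCycle lam)
    (h₁ : G.IsRed ρ₁) (hd : G.d ρ₁ = G.d ρ₂) (hr : G.r ρ₁ = G.r ρ₂)
    (hon : G.OnPath lam (G.r ρ₁)) : ρ₁ = ρ₂ :=
  (pathA hl (G.d ρ₁).2 (G.r ρ₁) hon).2 ρ₁ ρ₂ (prod_eq h₁ rfl) rfl
    (by rw [← hd]; exact prod_eq h₁ rfl) hr.symm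

private lemma red_unique_s {lam ρ₁ ρ₂ : G.Path} (hl : G.IsIsolatedRedCycle lam)
    (h₁ : G.IsRed ρ₁) (hd : G.d ρ₁ = G.d ρ₂) (hs : G.s ρ₁ = G.s ρ₂)
    (hon : G.OnPath lam (G.s ρ₁)) : ρ₁ = ρ₂ :=
  (pathB hl (G.d ρ₁).2 (G.s ρ₁) hon).2 ρ₁ ρ₂ (prod_eq h₁ rfl) rfl
    (by rw [← hd]; exact prod_eq h₁ rfl) hs.symm

end TwoGraph

/-- Factorisation against an isolated red cycle gives degree-preserving
bijections between sets of blue paths. -/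
theorem stmt1 (G : TwoGraph) (h31 : G.Cond31)
    (lam1 lam2 : G.Path)
    (h1 : G.IsIsolatedRedCycle lam1) (h2 : G.IsIsolatedRedCycle lam2) :
    (∀ μ, G.IsRed μ → G.OnPath lam1 (G.r μ) →
      ∃ F1 : {σ : G.Path // G.IsBlue σ ∧ G.r σ = G.s μ ∧ G.OnPath lam2 (G.s σ)} →
             {σ' : G.Path // G.IsBlue σ' ∧ G.r σ' = G.r μ ∧ G.OnPath lam2 (G.s σ')},
        Function.Bijective F1 ∧
        ∀ σ, G.d ((F1 σ : {σ' : G.Path // G.IsBlue σ' ∧ G.r σ' = G.r μ ∧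
              G.OnPath lam2 (G.s σ')}) : G.Path) = G.d (σ : G.Path) ∧
          ∃ ρ', G.IsSwap μ (σ : G.Path) ((F1 σ) : G.Path) ρ') ∧
    (∀ ν, G.IsRed ν → G.OnPath lam2 (G.r ν) →
      ∃ F2 : {σ : G.Path // G.IsBlue σ ∧ G.OnPath lam1 (G.r σ) ∧ G.s σ = G.r ν} →
             {σ' : G.Path // G.IsBlue σ' ∧ G.OnPath lam1 (G.r σ') ∧ G.s σ' = G.s ν},
        Function.Bijective F2 ∧
        ∀ σ, G.d ((F2 σ) : G.Path) = G.d (σ : G.Path) ∧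
          ∃ τ', G.IsSwap (σ : G.Path) ν τ' ((F2 σ) : G.Path)) := by
  constructor
  · -- Part 1
    intro μ hμred hμr
    have hμd : G.d μ = (0, (G.d μ).2) := TwoGraph.prod_eq hμred rfl
    have key : ∀ σ : G.Path, G.IsBlue σ → G.r σ = G.s μ → G.OnPath lam2 (G.s σ) →
        ∃ σ' ρ' : G.Path, (G.IsBlue σ' ∧ G.r σ' = G.r μ ∧ G.OnPath lam2 (G.s σ')) ∧
          G.d σ' = G.d σ ∧ G.d ρ' = G.d μ ∧ G.s σ' = G.r ρ' ∧
          G.comp σ' ρ' = G.comp μ σ ∧ G.s ρ' = G.s σ := by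
      intro σ hb hr hon
      have hsc : G.s μ = G.r σ := hr.symm
      have hdc : G.d (G.comp μ σ) = G.d σ + G.d μ := by
        rw [G.d_comp μ σ hsc, add_comm]
      obtain ⟨σ', ρ', hσ'd, hρ'd, hs', hc'⟩ := TwoGraph.factor_ex (G.comp μ σ) (G.d σ) (G.d μ) hdc
      have hb' : G.IsBlue σ' := by show (G.d σ').2 = 0; rw [hσ'd]; exact hb
      have hr' : G.r σ' = G.r μ := by
        rw [← G.r_comp σ' ρ' hs', hc', G.r_comp μ σ hsc]
      have hsρ' : G.s ρ' = G.s σ := by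
        rw [← G.s_comp σ' ρ' hs', hc', G.s_comp μ σ hsc]
      have hred' : G.IsRed ρ' := by show (G.d ρ').1 = 0; rw [hρ'd]; exact hμred
      have hon' : G.OnPath lam2 (G.s σ') := by
        rw [hs']
        exact TwoGraph.red_on_r h2 hred' (by rw [hsρ']; exact hon)
      exact ⟨σ', ρ', ⟨hb', hr', hon'⟩, hσ'd, hρ'd, hs', hc', hsρ'⟩
    choose f g hprop hdσ hdρ hsfg hcfg hsg using
      fun σ : {σ : G.Path // G.IsBlue σ ∧ G.r σ = G.s μ ∧ G.OnPath lam2 (G.s σ)} =>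
        key σ.1 σ.2.1 σ.2.2.1 σ.2.2.2
    refine ⟨fun σ => ⟨f σ, hprop σ⟩, ⟨?_, ?_⟩, ?_⟩
    · -- injective
      intro σ₁ σ₂ hEq
      have hf : f σ₁ = f σ₂ := congrArg Subtype.val hEq
      have hgred : ∀ σ, G.IsRed (g σ) := by
        intro σ; show (G.d (g σ)).1 = 0; rw [hdρ σ]; exact hμred
      have hg : g σ₁ = g σ₂ := by
        refine TwoGraph.red_unique_r h2 (hgred σ₁) ((hdρ σ₁).trans (hdρ σ₂).symm) ?_ ?_
        · rw [← hsfg σ₁, ← hsfg σ₂, hf]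
        · rw [← hsfg σ₁]; exact (hprop σ₁).2.2
      have hcc : G.comp μ σ₁.1 = G.comp μ σ₂.1 := by
        rw [← hcfg σ₁, ← hcfg σ₂, hf, hg]
      have hdd : G.d σ₂.1 = G.d σ₁.1 := by rw [← hdσ σ₁, ← hdσ σ₂, hf]
      have hsplit : G.d (G.comp μ σ₁.1) = G.d μ + G.d σ₁.1 :=
        G.d_comp μ σ₁.1 σ₁.2.2.1.symm
      exact Subtype.ext (TwoGraph.factor_eq hsplit rfl rfl σ₁.2.2.1.symm rfl rfl hdd
        σ₂.2.2.1.symm hcc.symm).2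
    · -- surjective
      intro σ'
      obtain ⟨hb', hr', hon'⟩ := σ'.2
      obtain ⟨⟨ρ', hρ'd, hρ'r, hρ'on⟩, -⟩ := TwoGraph.pathA h2 (G.d μ).2 (G.s σ'.1) hon'
      have hρ'dμ : G.d ρ' = G.d μ := hρ'd.trans hμd.symm
      have hsρ : G.s σ'.1 = G.r ρ' := hρ'r.symm
      have hθd : G.d (G.comp σ'.1 ρ') = G.d μ + G.d σ'.1 := by
        rw [G.d_comp _ _ hsρ, hρ'dμ, add_comm]
      obtain ⟨μ₀, σ, hμ₀d, hσd, hsμσ, hcμσ⟩ :=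
        TwoGraph.factor_ex (G.comp σ'.1 ρ') (G.d μ) (G.d σ'.1) hθd
      have hμ₀red : G.IsRed μ₀ := by show (G.d μ₀).1 = 0; rw [hμ₀d]; exact hμred
      have hμ₀r : G.r μ₀ = G.r μ := by
        rw [← G.r_comp μ₀ σ hsμσ, hcμσ, G.r_comp σ'.1 ρ' hsρ, hr']
      have hμμ : μ₀ = μ :=
        TwoGraph.red_unique_r h1 hμ₀red hμ₀d hμ₀r (by rw [hμ₀r]; exact hμr)
      have hσb : G.IsBlue σ := by show (G.d σ).2 = 0; rw [hσd]; exact hb'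
      have hσr : G.r σ = G.s μ := by rw [← hμμ]; exact hsμσ.symm
      have hσs : G.s σ = G.s ρ' := by
        rw [← G.s_comp μ₀ σ hsμσ, hcμσ, G.s_comp σ'.1 ρ' hsρ]
      have hσon : G.OnPath lam2 (G.s σ) := by rw [hσs]; exact hρ'on
      refine ⟨⟨σ, hσb, hσr, hσon⟩, ?_⟩
      apply Subtype.ext
      have hcc : G.comp μ σ = G.comp σ'.1 ρ' := hμμ ▸ hcμσ
      have hsplit : G.d (G.comp μ σ) = G.d σ + G.d μ := by
        rw [G.d_comp μ σ hσr.symm, add_comm]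
      exact (TwoGraph.factor_eq hsplit (hdσ ⟨σ, hσb, hσr, hσon⟩) (hdρ ⟨σ, hσb, hσr, hσon⟩)
        (hsfg ⟨σ, hσb, hσr, hσon⟩) (hcfg ⟨σ, hσb, hσr, hσon⟩)
        hσd.symm hρ'dμ hsρ hcc.symm).1
    · -- degree and swap
      intro σ
      exact ⟨hdσ σ, g σ, σ.2.2.1.symm, hsfg σ, hdσ σ, hdρ σ, hcfg σ⟩
  · -- Part 2
    intro ν hνred hνr
    have hνd : G.d ν = (0, (G.d ν).2) := TwoGraph.prod_eq hνred rfl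
    have hsν_on : G.OnPath lam2 (G.s ν) := TwoGraph.red_on_s h2 hνred hνr
    have key : ∀ σ : G.Path, G.IsBlue σ → G.OnPath lam1 (G.r σ) → G.s σ = G.r ν →
        ∃ σ'' τ' : G.Path, (G.IsBlue σ'' ∧ G.OnPath lam1 (G.r σ'') ∧ G.s σ'' = G.s ν) ∧
          G.d σ'' = G.d σ ∧ G.d τ' = G.d ν ∧ G.s τ' = G.r σ'' ∧
          G.comp τ' σ'' = G.comp σ ν ∧ G.r τ' = G.r σ := by
      intro σ hb hon hs
      have hdc : G.d (G.comp σ ν) = G.d ν + G.d σ := by rw [G.d_comp σ ν hs, add_comm]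
      obtain ⟨τ', σ'', hτ'd, hσ''d, hsτ, hcτ⟩ :=
        TwoGraph.factor_ex (G.comp σ ν) (G.d ν) (G.d σ) hdc
      have hτ'red : G.IsRed τ' := by show (G.d τ').1 = 0; rw [hτ'd]; exact hνred
      have hrτ : G.r τ' = G.r σ := by rw [← G.r_comp τ' σ'' hsτ, hcτ, G.r_comp σ ν hs]
      have hsσ'' : G.s σ'' = G.s ν := by rw [← G.s_comp τ' σ'' hsτ, hcτ, G.s_comp σ ν hs]
      have hb'' : G.IsBlue σ'' := by show (G.d σ'').2 = 0; rw [hσ''d]; exact hb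
      have hon'' : G.OnPath lam1 (G.r σ'') := by
        rw [← hsτ]
        exact TwoGraph.red_on_s h1 hτ'red (by rw [hrτ]; exact hon)
      exact ⟨σ'', τ', ⟨hb'', hon'', hsσ''⟩, hσ''d, hτ'd, hsτ, hcτ, hrτ⟩
    choose f g hprop hdσ hdτ hsfg hcfg hrg using
      fun σ : {σ : G.Path // G.IsBlue σ ∧ G.OnPath lam1 (G.r σ) ∧ G.s σ = G.r ν} =>
        key σ.1 σ.2.1 σ.2.2.1 σ.2.2.2
    refine ⟨fun σ => ⟨f σ, hprop σ⟩, ⟨?_, ?_⟩, ?_⟩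
    · -- injective
      intro σ₁ σ₂ hEq
      have hf : f σ₁ = f σ₂ := congrArg Subtype.val hEq
      have hgred : ∀ σ, G.IsRed (g σ) := by
        intro σ; show (G.d (g σ)).1 = 0; rw [hdτ σ]; exact hνred
      have hg : g σ₁ = g σ₂ := by
        refine TwoGraph.red_unique_s h1 (hgred σ₁) ((hdτ σ₁).trans (hdτ σ₂).symm) ?_ ?_
        · rw [hsfg σ₁, hsfg σ₂, hf]
        · rw [hsfg σ₁]; exact (hprop σ₁).2.1
      have hcc : G.comp σ₁.1 ν = G.comp σ₂.1 ν := by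
        rw [← hcfg σ₁, ← hcfg σ₂, hf, hg]
      have hdd : G.d σ₂.1 = G.d σ₁.1 := by rw [← hdσ σ₁, ← hdσ σ₂, hf]
      have hsplit : G.d (G.comp σ₁.1 ν) = G.d σ₁.1 + G.d ν :=
        G.d_comp σ₁.1 ν σ₁.2.2.2
      exact Subtype.ext (TwoGraph.factor_eq hsplit rfl rfl σ₁.2.2.2 rfl hdd rfl
        σ₂.2.2.2 hcc.symm).1
    · -- surjective
      intro σ''
      obtain ⟨hb'', hon'', hs''⟩ := σ''.2
      obtain ⟨⟨τ', hτ'd, hτ's, hτ'on⟩, -⟩ := TwoGraph.pathB h1 (G.d ν).2 (G.r σ''.1) hon''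
      have hτ'dν : G.d τ' = G.d ν := hτ'd.trans hνd.symm
      have hsτ : G.s τ' = G.r σ''.1 := hτ's
      have hθd : G.d (G.comp τ' σ''.1) = G.d σ''.1 + G.d ν := by
        rw [G.d_comp _ _ hsτ, hτ'dν, add_comm]
      obtain ⟨σ, ν₀, hσd, hν₀d, hsσν, hcσν⟩ :=
        TwoGraph.factor_ex (G.comp τ' σ''.1) (G.d σ''.1) (G.d ν) hθd
      have hν₀red : G.IsRed ν₀ := by show (G.d ν₀).1 = 0; rw [hν₀d]; exact hνred
      have hν₀s : G.s ν₀ = G.s ν := by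
        rw [← G.s_comp σ ν₀ hsσν, hcσν, G.s_comp τ' σ''.1 hsτ, hs'']
      have hνν : ν₀ = ν :=
        TwoGraph.red_unique_s h2 hν₀red hν₀d hν₀s (by rw [hν₀s]; exact hsν_on)
      have hσb : G.IsBlue σ := by show (G.d σ).2 = 0; rw [hσd]; exact hb''
      have hσs : G.s σ = G.r ν := by rw [← hνν]; exact hsσν
      have hσr : G.r σ = G.r τ' := by
        rw [← G.r_comp σ ν₀ hsσν, hcσν, G.r_comp τ' σ''.1 hsτ]
      have hσon : G.OnPath lam1 (G.r σ) := by rw [hσr]; exact hτ'on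
      refine ⟨⟨σ, hσb, hσon, hσs⟩, ?_⟩
      apply Subtype.ext
      have hcc : G.comp σ ν = G.comp τ' σ''.1 := hνν ▸ hcσν
      have hsplit : G.d (G.comp σ ν) = G.d ν + G.d σ := by
        rw [G.d_comp σ ν hσs, add_comm]
      exact (TwoGraph.factor_eq hsplit (hdτ ⟨σ, hσb, hσon, hσs⟩) (hdσ ⟨σ, hσb, hσon, hσs⟩)
        (hsfg ⟨σ, hσb, hσon, hσs⟩) (hcfg ⟨σ, hσb, hσon, hσs⟩)
        hτ'dν hσd.symm hsτ hcc.symm).2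
    · -- degree and swap
      intro σ
      exact ⟨hdσ σ, g σ, σ.2.2.2, hsfg σ, hdτ σ, hdσ σ, hcfg σ⟩
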